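/- Let Γ be a group generated by a finite symmetric set S, with symmetric probability weights μ(g) > 0 for g ∈ S, and Δ = 1 − Σ_{g∈S} μ(g) g ∈ ℂ[Γ]. Suppose there exists k > 0 such that for every unitary representation π of Γ on a complex Hilbert space, spec(π(Δ)) ⊆ {0} ∪ [k, ∞). Then every unitary representation of Γ that has almost invariant vectors (for every ε > 0 a unit vector ξ with ‖π(g)ξ − ξ‖ < ε for all g ∈ S) has a nonzero invariant vector (π(g)ξ = ξ for all g ∈ Γ). -/

import Mathlib

open scoped InnerProductSpace

section Aux

variable {H : Type} [NormedAddCommGroup H] [InnerProductSpace ℂ H] [CompleteSpace H]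

lemma aux_inner_le_of_le {A B : H →L[ℂ] H} (h : A ≤ B) (x : H) :
    (⟪A x, x⟫_ℂ).re ≤ (⟪B x, x⟫_ℂ).re := by
  have hp := (ContinuousLinearMap.le_def A B).mp h
  have h0 := hp.inner_nonneg_left x
  simp only [ContinuousLinearMap.sub_apply, inner_sub_left, map_sub] at h0
  replace h0 := (Complex.nonneg_iff.mp h0).1
  rw [Complex.sub_re] at h0
  linarith

lemma aux_re_inner_self {x : H} : (⟪x, x⟫_ℂ).re = ‖x‖ ^ 2 := by
  rw [← RCLike.re_to_complex]
  exact inner_self_eq_norm_sq x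

lemma aux_sq_inner_self {A : H →L[ℂ] H} (hA : IsSelfAdjoint A) (x : H) :
    (⟪(A * A) x, x⟫_ℂ).re = ‖A x‖ ^ 2 := by
  have hadj : A = ContinuousLinearMap.adjoint A := by
    rw [← ContinuousLinearMap.star_eq_adjoint, hA.star_eq]
  have h4 : ⟪A (A x), x⟫_ℂ = ⟪A x, A x⟫_ℂ := by
    calc ⟪A (A x), x⟫_ℂ = ⟪ContinuousLinearMap.adjoint A (A x), x⟫_ℂ := by rw [← hadj]
      _ = ⟪A x, A x⟫_ℂ := ContinuousLinearMap.adjoint_inner_left A x (A x)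
  have hmul : (A * A) x = A (A x) := rfl
  rw [hmul, h4, aux_re_inner_self]

lemma aux_smul_sq_inner_self (r : ℝ) {A : H →L[ℂ] H} (hA : IsSelfAdjoint A) (x : H) :
    (⟪((r : ℝ) • (A * A)) x, x⟫_ℂ).re = r * ‖A x‖ ^ 2 := by
  have h2 : ((r : ℝ) • (A * A)) x = (r : ℝ) • ((A * A) x) := rfl
  rw [h2, RCLike.real_smul_eq_coe_smul (K := ℂ), inner_smul_left, ← RCLike.re_to_complex,
    RCLike.conj_ofReal, RCLike.re_ofReal_mul, RCLike.re_to_complex, aux_sq_inner_self hA x]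

end Aux

set_option maxHeartbeats 1600000 in
/-- if the Laplacian Δ = 1 − Σ_{g∈S} μ(g) g of a finitely
generated group Γ has a uniform spectral gap spec(π(Δ)) ⊆ {0} ∪ [k, ∞) in
every unitary representation, then every unitary representation of Γ with
almost invariant vectors has a nonzero invariant vector. -/
theorem invariant_vector_of_spectral_gap
    (Γ : Type*) [Group Γ]
    (S : Finset Γ)
    (hSsym : ∀ g, g ∈ S ↔ g⁻¹ ∈ S)
    (hSgen : Subgroup.closure (S : Set Γ) = ⊤)
    (μ : Γ → ℝ) (hμpos : ∀ g ∈ S, 0 < μ g)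
    (hμsym : ∀ g ∈ S, μ g⁻¹ = μ g)
    (hμprob : ∑ g ∈ S, μ g = 1)
    (k : ℝ) (hk : 0 < k)
    (hgap : ∀ (H : Type) (_ : NormedAddCommGroup H) (_ : InnerProductSpace ℂ H)
      (_ : CompleteSpace H) (π : Γ →* unitary (H →L[ℂ] H)),
      spectrum ℂ ((1 : H →L[ℂ] H) - ∑ g ∈ S, (μ g : ℂ) • ((π g : H →L[ℂ] H)))
        ⊆ {0} ∪ ((↑) '' Set.Ici k)) :
    ∀ (H : Type) (_ : NormedAddCommGroup H) (_ : InnerProductSpace ℂ H)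
      (_ : CompleteSpace H) (π : Γ →* unitary (H →L[ℂ] H)),
      (∀ ε : ℝ, 0 < ε → ∃ ξ : H, ‖ξ‖ = 1 ∧ ∀ g ∈ S, ‖(π g : H →L[ℂ] H) ξ - ξ‖ < ε) →
      ∃ ξ : H, ξ ≠ 0 ∧ ∀ g : Γ, (π g : H →L[ℂ] H) ξ = ξ := by
  intro H _ _ _ π hai
  set T : H →L[ℂ] H := (1 : H →L[ℂ] H) - ∑ g ∈ S, (μ g : ℂ) • ((π g : H →L[ℂ] H)) with hTdef
  -- T is self-adjoint
  have hsa : IsSelfAdjoint T := by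
    rw [IsSelfAdjoint, hTdef, star_sub, star_one, star_sum]
    congr 1
    have hterm : ∀ g, star ((μ g : ℂ) • ((π g : H →L[ℂ] H)))
        = (μ g : ℂ) • ((π g⁻¹ : H →L[ℂ] H)) := by
      intro g
      rw [star_smul, Complex.star_def, Complex.conj_ofReal, map_inv, ← Unitary.star_eq_inv,
        Unitary.coe_star]
    simp_rw [hterm]
    refine Finset.sum_nbij' (i := fun g => g⁻¹) (j := fun g => g⁻¹) ?_ ?_ ?_ ?_ ?_
    · intro g hg; exact (hSsym g).mp hg
    · intro g hg; exact (hSsym g).mp hg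
    · intro g _; simp
    · intro g _; simp
    · intro g hg
      simp [hμsym g hg]
  -- pointwise formula for re ⟪T ξ, ξ⟫
  have hkey : ∀ ξ : H, (⟪T ξ, ξ⟫_ℂ).re
      = ∑ g ∈ S, μ g * (‖(π g : H →L[ℂ] H) ξ - ξ‖ ^ 2 / 2) := by
    intro ξ
    have hnorm : ∀ g : Γ, ‖(π g : H →L[ℂ] H) ξ‖ = ‖ξ‖ := fun g => Unitary.norm_map (π g) ξ
    have hsq : ∀ g : Γ, ‖(π g : H →L[ℂ] H) ξ - ξ‖ ^ 2
        = 2 * ‖ξ‖ ^ 2 - 2 * (⟪(π g : H →L[ℂ] H) ξ, ξ⟫_ℂ).re := by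
      intro g
      have := norm_sub_sq (𝕜 := ℂ) ((π g : H →L[ℂ] H) ξ) ξ
      rw [hnorm g, RCLike.re_to_complex] at this
      rw [this]; ring
    have hT : T ξ = ξ - ∑ g ∈ S, (μ g : ℂ) • (π g : H →L[ℂ] H) ξ := by
      simp [hTdef, ContinuousLinearMap.sum_apply]
    rw [hT, inner_sub_left, sum_inner]
    simp only [inner_smul_left, Complex.star_def, Complex.conj_ofReal, Complex.sub_re,
      Complex.re_sum, Complex.mul_re, Complex.ofReal_re, Complex.ofReal_im]
    have hξ : (⟪ξ, ξ⟫_ℂ).re = ‖ξ‖ ^ 2 := aux_re_inner_self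
    rw [hξ]
    have : ∑ g ∈ S, (μ g * (⟪(π g : H →L[ℂ] H) ξ, ξ⟫_ℂ).re
        - 0 * (⟪(π g : H →L[ℂ] H) ξ, ξ⟫_ℂ).im)
        = ∑ g ∈ S, μ g * (⟪(π g : H →L[ℂ] H) ξ, ξ⟫_ℂ).re := by
      refine Finset.sum_congr rfl fun g _ => by ring
    rw [this]
    have h1 : ‖ξ‖ ^ 2 = ∑ g ∈ S, μ g * ‖ξ‖ ^ 2 := by
      rw [← Finset.sum_mul, hμprob, one_mul]
    rw [h1, ← Finset.sum_sub_distrib]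
    refine Finset.sum_congr rfl fun g _ => ?_
    rw [hsq g]; ring
  -- vectors killed by T are S-invariant
  have hker : ∀ η : H, T η = 0 → ∀ g ∈ S, (π g : H →L[ℂ] H) η = η := by
    intro η hη g hg
    have h0 : ∑ g ∈ S, μ g * (‖(π g : H →L[ℂ] H) η - η‖ ^ 2 / 2) = 0 := by
      rw [← hkey η, hη]; simp
    have hnn : ∀ g ∈ S, 0 ≤ μ g * (‖(π g : H →L[ℂ] H) η - η‖ ^ 2 / 2) := by
      intro g hg
      exact mul_nonneg (hμpos g hg).le (by positivity)
    have := (Finset.sum_eq_zero_iff_of_nonneg hnn).mp h0 g hg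
    have h2 : ‖(π g : H →L[ℂ] H) η - η‖ ^ 2 / 2 = 0 :=
      (mul_eq_zero.mp this).resolve_left (hμpos g hg).ne'
    have h3 : ‖(π g : H →L[ℂ] H) η - η‖ = 0 := by
      nlinarith [norm_nonneg ((π g : H →L[ℂ] H) η - η)]
    rw [← sub_eq_zero]
    exact norm_eq_zero.mp h3
  -- real spectrum of T
  have hspecR : spectrum ℝ T ⊆ {0} ∪ Set.Ici k := by
    intro x hx
    have hxC : (x : ℂ) ∈ spectrum ℂ T := by
      rw [show ((x : ℂ)) = algebraMap ℝ ℂ x from rfl]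
      exact spectrum.algebraMap_mem ℂ hx
    rcases hgap H _ _ _ π hxC with h | ⟨y, hy, hyx⟩
    · left
      simp only [Set.mem_singleton_iff] at h ⊢
      exact_mod_cast h
    · right
      have : y = x := by exact_mod_cast hyx
      rwa [this] at hy
  -- the continuous function cutting the spectral projection onto ker T
  set f : ℝ → ℝ := fun t => max (1 - t / k) 0 with hfdef
  have hfc : Continuous f := (continuous_const.sub (continuous_id.div_const k)).max
    continuous_const
  have hfcon : ContinuousOn f (spectrum ℝ T) := hfc.continuousOn
  have hidcon : ContinuousOn (fun t : ℝ => t) (spectrum ℝ T) := continuousOn_id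
  have hf1con : ContinuousOn (fun t : ℝ => f t - 1) (spectrum ℝ T) :=
    hfcon.sub continuousOn_const
  set P : H →L[ℂ] H := cfc f T with hPdef
  -- T * P = 0
  have hTP : T * P = 0 := by
    have h1 : cfc (fun t : ℝ => t * f t) T = T * P := by
      rw [cfc_mul (fun t : ℝ => t) f T hidcon hfcon, cfc_id' ℝ T]
    rw [← h1]
    have h2 : (spectrum ℝ T).EqOn (fun t : ℝ => t * f t) (fun _ => 0) := by
      intro x hx
      rcases hspecR hx with h | h
      · simp only [Set.mem_singleton_iff] at h
        simp [h]
      · simp only [Set.mem_Ici] at h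
        have : f x = 0 := by
          rw [hfdef]
          simp only
          rw [max_eq_right]
          have : (1 : ℝ) ≤ x / k := (one_le_div hk).mpr h
          linarith
        simp [this]
    rw [cfc_congr h2]
    simp
  -- (P - 1)^* (P - 1) ≤ k⁻¹ ^ 2 • (T * T)
  have hPsa : IsSelfAdjoint P := cfc_predicate f T
  have hle : (P - 1) * (P - 1) ≤ (k⁻¹ ^ 2 : ℝ) • (T * T) := by
    have h1 : cfc (fun t : ℝ => f t - 1) T = P - 1 := by
      rw [cfc_sub (fun t : ℝ => f t) (fun _ : ℝ => 1) T hfcon continuousOn_const,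
        cfc_const (1:ℝ) T, map_one]
    have h2 : cfc (fun t : ℝ => (f t - 1) * (f t - 1)) T = (P - 1) * (P - 1) := by
      rw [cfc_mul (fun t : ℝ => f t - 1) (fun t : ℝ => f t - 1) T hf1con hf1con, h1]
    have h3 : cfc (fun t : ℝ => k⁻¹ ^ 2 * (t * t)) T = (k⁻¹ ^ 2 : ℝ) • (T * T) := by
      rw [cfc_const_mul (k⁻¹ ^ 2 : ℝ) (fun t : ℝ => t * t) T (hidcon.mul hidcon),
        cfc_mul (fun t : ℝ => t) (fun t : ℝ => t) T hidcon hidcon, cfc_id' ℝ T]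
    rw [← h2, ← h3]
    refine cfc_mono (fun x hx => ?_) (hf1con.mul hf1con) (continuousOn_const.mul (hidcon.mul hidcon))
    rcases hspecR hx with h | h
    · simp only [Set.mem_singleton_iff] at h
      subst h
      have : f 0 = 1 := by
        rw [hfdef]; simp [max_eq_left, zero_div]
      rw [this]; simp
    · simp only [Set.mem_Ici] at h
      have hf0 : f x = 0 := by
        rw [hfdef]
        simp only
        rw [max_eq_right]
        have : (1 : ℝ) ≤ x / k := (one_le_div hk).mpr h
        linarith
      rw [hf0]
      have hx2 : k * k ≤ x * x := mul_self_le_mul_self hk.le h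
      have hinv : (0 : ℝ) ≤ k⁻¹ ^ 2 := by positivity
      calc (0 - 1 : ℝ) * (0 - 1) = k⁻¹ ^ 2 * (k * k) := by
            rw [pow_two]
            field_simp
            norm_num
        _ ≤ k⁻¹ ^ 2 * (x * x) := mul_le_mul_of_nonneg_left hx2 hinv
  -- norm estimate: ‖P ξ - ξ‖ ≤ ‖T ξ‖ / k
  have hPnorm : ∀ ξ : H, ‖P ξ - ξ‖ ≤ ‖T ξ‖ / k := by
    intro ξ
    have h1 := aux_inner_le_of_le hle ξ
    have hsa1 : IsSelfAdjoint (P - 1) := by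
      rw [IsSelfAdjoint, star_sub, star_one, hPsa.star_eq]
    have hL : (⟪((P - 1) * (P - 1)) ξ, ξ⟫_ℂ).re = ‖P ξ - ξ‖ ^ 2 := by
      rw [aux_sq_inner_self hsa1 ξ]
      simp [ContinuousLinearMap.sub_apply]
    have hR : (⟪((k⁻¹ ^ 2 : ℝ) • (T * T)) ξ, ξ⟫_ℂ).re = k⁻¹ ^ 2 * ‖T ξ‖ ^ 2 :=
      aux_smul_sq_inner_self (k⁻¹ ^ 2) hsa ξ
    rw [hL, hR] at h1
    have hk2 : (0 : ℝ) < k ^ 2 := by positivity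
    have : ‖P ξ - ξ‖ ^ 2 ≤ (‖T ξ‖ / k) ^ 2 := by
      rw [div_pow]
      rw [le_div_iff₀ hk2]
      have : k⁻¹ ^ 2 * ‖T ξ‖ ^ 2 * k ^ 2 = ‖T ξ‖ ^ 2 := by
        field_simp
      nlinarith [h1]
    have hnn : (0 : ℝ) ≤ ‖T ξ‖ / k := div_nonneg (norm_nonneg _) hk.le
    nlinarith [norm_nonneg (P ξ - ξ)]
  -- get an almost invariant vector and project it
  obtain ⟨ξ, hξnorm, hξinv⟩ := hai (k / 2) (by positivity)
  have hTξ : ‖T ξ‖ ≤ k / 2 := by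
    have hTξeq : T ξ = ∑ g ∈ S, (μ g : ℂ) • (ξ - (π g : H →L[ℂ] H) ξ) := by
      have h1 : T ξ = ξ - ∑ g ∈ S, (μ g : ℂ) • (π g : H →L[ℂ] H) ξ := by
        simp [hTdef, ContinuousLinearMap.sum_apply]
      have h3 : ∑ g ∈ S, (μ g : ℂ) • (ξ - (π g : H →L[ℂ] H) ξ)
          = (∑ g ∈ S, (μ g : ℂ)) • ξ - ∑ g ∈ S, (μ g : ℂ) • (π g : H →L[ℂ] H) ξ := by
        rw [Finset.sum_smul, ← Finset.sum_sub_distrib]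
        exact Finset.sum_congr rfl fun g _ => smul_sub _ _ _
      have h4 : (∑ g ∈ S, (μ g : ℂ)) = 1 := by
        norm_cast
      rw [h1, h3, h4, one_smul]
    rw [hTξeq]
    calc ‖∑ g ∈ S, (μ g : ℂ) • (ξ - (π g : H →L[ℂ] H) ξ)‖
        ≤ ∑ g ∈ S, ‖(μ g : ℂ) • (ξ - (π g : H →L[ℂ] H) ξ)‖ := norm_sum_le _ _
      _ ≤ ∑ g ∈ S, μ g * (k / 2) := by
          refine Finset.sum_le_sum fun g hg => ?_
          rw [norm_smul, Complex.norm_real, Real.norm_eq_abs, abs_of_pos (hμpos g hg)]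
          refine mul_le_mul_of_nonneg_left ?_ (hμpos g hg).le
          rw [norm_sub_rev]
          exact (hξinv g hg).le
      _ = k / 2 := by rw [← Finset.sum_mul, hμprob, one_mul]
  have hPξ : P ξ ≠ 0 := by
    intro h0
    have h1 := hPnorm ξ
    rw [h0, zero_sub, norm_neg, hξnorm] at h1
    have h2 : ‖T ξ‖ / k ≤ 1 / 2 := by
      rw [div_le_div_iff₀ hk (by norm_num : (0:ℝ) < 2)]
      linarith
    linarith
  refine ⟨P ξ, hPξ, ?_⟩
  have hTPξ : T (P ξ) = 0 := by
    have : T (P ξ) = (T * P) ξ := rfl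
    rw [this, hTP]; rfl
  have hSinv : ∀ g ∈ S, (π g : H →L[ℂ] H) (P ξ) = P ξ := hker (P ξ) hTPξ
  intro g
  have hg : g ∈ Subgroup.closure (S : Set Γ) := by rw [hSgen]; trivial
  induction hg using Subgroup.closure_induction with
  | mem x hx => exact hSinv x hx
  | one =>
      rw [map_one]
      rfl
  | mul x y _ _ hx hy =>
      rw [map_mul]
      show ((π x : H →L[ℂ] H).comp (π y : H →L[ℂ] H)) (P ξ) = P ξ
      simp only [ContinuousLinearMap.comp_apply, hy, hx]
  | inv x _ hx =>
      have h6 : π x⁻¹ * π x = 1 := by rw [← map_mul, inv_mul_cancel, map_one]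
      have h5 : (π x⁻¹ : H →L[ℂ] H) ((π x : H →L[ℂ] H) (P ξ)) = P ξ := by
        calc (π x⁻¹ : H →L[ℂ] H) ((π x : H →L[ℂ] H) (P ξ))
            = ((π x⁻¹ * π x : unitary (H →L[ℂ] H)) : H →L[ℂ] H) (P ξ) := rfl
          _ = P ξ := by rw [h6]; rfl
      conv_lhs => rw [← hx]
      exact h5
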